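/- Let V be a finite type, E : V → V → Prop a directed graph, and s, t ∈ V with s ≠ t. If there is a path from s to t in E (i.e., Relation.ReflTransGen E s t), then there exists a bijection f : V ≃ V such that for every x ∈ V at least one of the following holds: (x ∉ {s, t} and f x = x), or E x (f x), or (x = t and f x = s). (Concretely, for a repetition-free path P = s, x₁, …, x_m, t, the map sending s ↦ x₁, x₁ ↦ x₂, …, x_m ↦ t, t ↦ s, and fixing every vertex not on P, is such a bijection.) -/

import Mathlib

open List in
lemma exists_nodup_chain' {α : Type*} {r : α → α → Prop} {b : α} :
    ∀ (n : ℕ) (a : α) (l : List α), l.length ≤ n → List.Chain r a l →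
      (a :: l).getLast (cons_ne_nil _ _) = b →
      ∃ l', List.Chain r a l' ∧ (a :: l').getLast (cons_ne_nil _ _) = b ∧
        (a :: l').Nodup ∧ ∀ x ∈ l', x ∈ l := by
  intro n
  induction n with
  | zero =>
    intro a l hl hc hb
    rw [List.length_eq_zero_iff.mp (Nat.le_zero.mp hl)] at hb ⊢
    exact ⟨[], List.Chain.nil, hb, by simp, by simp⟩
  | succ n ih =>
    intro a l hl hc hb
    by_cases ha : a ∈ l
    · obtain ⟨l₁, l₂, rfl⟩ := List.append_of_mem ha
      have hc₂ : List.Chain r a l₂ := (List.isChain_cons_split.mp hc).2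
      have hb₂ : (a :: l₂).getLast (cons_ne_nil _ _) = b := by
        rw [← hb]
        exact (List.getLast_append_of_right_ne_nil (a :: l₁) (a :: l₂) (cons_ne_nil _ _)).symm
      have hlen : l₂.length ≤ n := by
        simp only [List.length_append, List.length_cons] at hl
        omega
      obtain ⟨l', h1, h2, h3, h4⟩ := ih a l₂ hlen hc₂ hb₂
      exact ⟨l', h1, h2, h3, fun x hx => by simp [h4 x hx]⟩
    · cases l with
      | nil => exact ⟨[], List.Chain.nil, hb, by simp, by simp⟩
      | cons c l' =>
        rw [List.Chain, List.isChain_cons_cons] at hc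
        have hb' : (c :: l').getLast (cons_ne_nil _ _) = b := by
          rwa [List.getLast_cons (cons_ne_nil _ _)] at hb
        have hlen : l'.length ≤ n := by simpa using hl
        obtain ⟨l'', h1, h2, h3, h4⟩ := ih c l' hlen hc.2 hb'
        refine ⟨c :: l'', List.chain_cons.mpr ⟨hc.1, h1⟩, ?_, ?_, ?_⟩
        · rwa [List.getLast_cons (cons_ne_nil _ _)]
        · refine List.nodup_cons.mpr ⟨?_, h3⟩
          intro hmem
          apply ha
          rcases List.mem_cons.mp hmem with h | h
          · simp [h]
          · simp [h4 a h]
        · intro x hx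
          rcases List.mem_cons.mp hx with h | h
          · simp [h]
          · simp [h4 x h]

/-- Forward direction of the reduction from graph reachability to bipartite perfect matching:
if there is a path from `s` to `t` in the directed graph `E` (with `s ≠ t`, `V` finite), then
the associated bipartite graph (with edges `(x, x')` for `x ∉ {s, t}`, edges `(x, y')` for
`E x y`, and the edge `(t, s')`) has a perfect matching, i.e. a bijection `f : V ≃ V`
such that every `x` is matched along one of these edges. -/
theorem perfect_matching_of_reachable
    {V : Type*} [Fintype V] (E : V → V → Prop) (s t : V) (hst : s ≠ t)
    (hpath : Relation.ReflTransGen E s t) :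
    ∃ f : V ≃ V, ∀ x : V,
      (x ∉ ({s, t} : Set V) ∧ f x = x) ∨ E x (f x) ∨ (x = t ∧ f x = s) := by
  classical
  obtain ⟨l₀, hc₀, hb₀⟩ := List.exists_isChain_cons_of_relationReflTransGen hpath
  obtain ⟨l, hc, hb, hnd, -⟩ := exists_nodup_chain' l₀.length s l₀ le_rfl hc₀ hb₀
  set p := s :: l with hp
  have hsp : s ∈ p := List.mem_cons_self
  have htp : t ∈ p := hb ▸ List.getLast_mem _
  refine ⟨p.formPerm, fun x => ?_⟩
  by_cases hx : x ∈ p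
  · obtain ⟨i, hi, rfl⟩ := List.getElem_of_mem hx
    by_cases hlast : i = p.length - 1
    · subst hlast
      have hxt : p[p.length - 1] = t := by
        rw [← hb]
        exact (List.getLast_eq_getElem (List.cons_ne_nil _ _)).symm
      right; right
      refine ⟨hxt, ?_⟩
      have h2 := List.formPerm_apply_getLast s l
      rw [List.getLast_eq_getElem] at h2
      exact h2
    · right; left
      have hi1 : i + 1 < p.length := by
        have : 0 < p.length := by simp [hp]
        omega
      rw [List.formPerm_apply_lt_getElem p hnd i hi1]
      have hch : p.Chain' E := hc
      have h3 := List.isChain_iff_getElem.mp hch i (by omega)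
      simpa using h3
  · left
    refine ⟨?_, List.formPerm_apply_of_notMem hx⟩
    intro hmem
    rcases hmem with h | h
    · exact hx (h ▸ hsp)
    · exact hx (h ▸ htp)
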